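/- Let G be a graph with n vertices and m ≥ 1 edges, and let A be the adjacency matrix of the complete subdivision graph of G, i.e., the block matrix [[0_{n×n}, B(G)],[B(G)ᵀ, J_m − I_m]]. Then for every real x such that (x²+x−2)·I_m − A(𝓛(G)) is invertible, (x+1)^n · det(x·I_{n+m} − A) = (x+1)^m · ( 1 − x·χ_{𝓛(G)}(x²+x−2) ) · 𝒬_G(x²+x). -/

import Mathlib

open Matrix SimpleGraph

/-- The vertex–edge incidence matrix of a graph, relative to an enumeration
`e` of its edges. -/
noncomputable def incMat {V : Type} [Fintype V] [DecidableEq V] {m : ℕ}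
    (G : SimpleGraph V) [Fintype G.edgeSet] (e : Fin m ≃ G.edgeFinset) :
    Matrix V (Fin m) ℝ :=
  Matrix.of fun i j => if i ∈ (e j : Sym2 V) then (1 : ℝ) else 0

/-- The coronal of a matrix: $\chi_M(y)=\mathbb 1^T (yI-M)^{-1}\mathbb 1$,
i.e. the sum of all entries of $(yI-M)^{-1}$. -/
noncomputable def coronal {k : ℕ} (M : Matrix (Fin k) (Fin k) ℝ) (y : ℝ) : ℝ :=
  ∑ i : Fin k, ∑ j : Fin k, ((y • (1 : Matrix (Fin k) (Fin k) ℝ) - M)⁻¹) i j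

/-- Auxiliary: splitting the characteristic matrix of the complete subdivision
graph into blocks. -/
lemma aux_block_form (n m : ℕ) (B : Matrix (Fin n) (Fin m) ℝ) (x : ℝ) :
    x • (1 : Matrix (Fin n ⊕ Fin m) (Fin n ⊕ Fin m) ℝ) -
      Matrix.fromBlocks 0 B Bᵀ (Matrix.of (fun _ _ => (1 : ℝ)) - 1)
    = Matrix.fromBlocks (x • 1) (-B) (-Bᵀ)
        ((x+1) • 1 - Matrix.of (fun _ _ => (1 : ℝ))) := by
  have h1 : (x • (0 : Matrix (Fin n) (Fin m) ℝ)) + -B = -B := by module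
  have h2 : (x • (0 : Matrix (Fin m) (Fin n) ℝ)) + -Bᵀ = -Bᵀ := by module
  have h3 : (x • (1 : Matrix (Fin m) (Fin m) ℝ)) + -(Matrix.of (fun _ _ => (1:ℝ)) - 1)
      = (x+1) • 1 - Matrix.of (fun _ _ => (1 : ℝ)) := by module
  have h0 : (x • (1 : Matrix (Fin n) (Fin n) ℝ)) + -(0 : Matrix (Fin n) (Fin n) ℝ)
      = x • 1 := by module
  rw [← Matrix.fromBlocks_one, Matrix.fromBlocks_smul, sub_eq_add_neg,
    Matrix.fromBlocks_neg, Matrix.fromBlocks_add, h0, h1, h2, h3]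

/-- Auxiliary: the rank-one update (matrix determinant lemma) for the
all-ones perturbation, expressed via the coronal. -/
lemma aux_rank_one (m : ℕ) (x : ℝ) (P : Matrix (Fin m) (Fin m) ℝ)
    (N : Matrix (Fin m) (Fin m) ℝ) (hN : N = (x^2+x-2) • 1 - (P - (2:ℝ) • 1))
    (hdet : IsUnit N.det) :
    (N - x • (Matrix.of (fun _ _ => (1:ℝ)) : Matrix (Fin m) (Fin m) ℝ)).det
      = N.det * (1 - x * coronal (P - (2:ℝ) • 1) (x^2+x-2)) := by
  have hcol : N - x • (Matrix.of (fun _ _ => (1:ℝ)) : Matrix (Fin m) (Fin m) ℝ)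
      = N + Matrix.replicateCol Unit (fun _ => (1:ℝ)) * Matrix.replicateRow Unit (fun _ => -x) := by
    ext i j
    simp [Matrix.mul_apply, sub_eq_add_neg]
  have hc : coronal (P - (2:ℝ) • 1) (x^2+x-2) = ∑ i, ∑ j, N⁻¹ i j := by
    simp only [coronal, ← hN]
  rw [hcol, Matrix.det_add_replicateCol_mul_replicateRow hdet]
  congr 1
  rw [Matrix.det_unique, hc]
  simp [Matrix.mul_apply, Finset.sum_mul, Finset.mul_sum]
  rw [Finset.sum_comm]
  ring_nf

/-- Auxiliary: Sylvester-type determinant identity. -/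
lemma aux_sylvester (n m : ℕ) (B : Matrix (Fin n) (Fin m) ℝ) (y : ℝ) (hy : y ≠ 0) :
    y^n * (y • (1 : Matrix (Fin m) (Fin m) ℝ) - Bᵀ * B).det
      = y^m * (y • (1 : Matrix (Fin n) (Fin n) ℝ) - B * Bᵀ).det := by
  have e1 : y • (1 : Matrix (Fin m) (Fin m) ℝ) - Bᵀ * B
      = y • (1 + ((-(y⁻¹)) • Bᵀ) * B) := by
    rw [Matrix.smul_mul, smul_add, smul_smul, mul_neg, mul_inv_cancel₀ hy]
    module
  have e2 : y • (1 : Matrix (Fin n) (Fin n) ℝ) - B * Bᵀ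
      = y • (1 + B * ((-(y⁻¹)) • Bᵀ)) := by
    rw [Matrix.mul_smul, smul_add, smul_smul, mul_neg, mul_inv_cancel₀ hy]
    module
  rw [e1, e2, Matrix.det_smul, Matrix.det_smul, Matrix.det_one_add_mul_comm]
  simp
  ring

/-- Auxiliary: the `x = 0` case of the main theorem. -/
lemma aux_zero_case (n m : ℕ) (B : Matrix (Fin n) (Fin m) ℝ)
    (Jm : Matrix (Fin m) (Fin m) ℝ) (hP : IsUnit (Bᵀ * B).det) :
    (Matrix.fromBlocks (0 : Matrix (Fin n) (Fin n) ℝ) (-B) (-Bᵀ) (1 - Jm)).det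
      = (-(B * Bᵀ)).det := by
  set P := Bᵀ * B with hPdef
  have hPP : P * ((Bᵀ*B)⁻¹) = 1 := Matrix.mul_nonsing_inv _ hP
  have hprod : Matrix.fromBlocks (0 : Matrix (Fin n) (Fin n) ℝ) (-B) (-Bᵀ) (1 - Jm) *
      Matrix.fromBlocks (1 : Matrix (Fin n) (Fin n) ℝ) (B * (Bᵀ*B)⁻¹) Bᵀ
        (0 : Matrix (Fin m) (Fin m) ℝ)
      = Matrix.fromBlocks (-(B * Bᵀ)) 0
          ((-Bᵀ) * (1 : Matrix (Fin n) (Fin n) ℝ) + (1 - Jm) * Bᵀ) (-1) := by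
    rw [Matrix.fromBlocks_multiply]
    have h11 : (0 : Matrix (Fin n) (Fin n) ℝ) * (1 : Matrix (Fin n) (Fin n) ℝ)
        + (-B) * Bᵀ = -(B * Bᵀ) := by simp
    have h12 : (0 : Matrix (Fin n) (Fin n) ℝ) * (B * (Bᵀ*B)⁻¹)
        + (-B) * (0 : Matrix (Fin m) (Fin m) ℝ) = 0 := by simp
    have h22 : (-Bᵀ) * (B * (Bᵀ*B)⁻¹) + (1 - Jm) * (0 : Matrix (Fin m) (Fin m) ℝ) = -1 := by
      rw [Matrix.mul_zero, add_zero, Matrix.neg_mul, ← Matrix.mul_assoc, ← hPdef, hPP]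
    rw [h11, h12, h22]
  have hdets := congrArg Matrix.det hprod
  rw [Matrix.det_mul, Matrix.det_fromBlocks_one₁₁, Matrix.det_fromBlocks_zero₁₂] at hdets
  have hR : ((0 : Matrix (Fin m) (Fin m) ℝ) - Bᵀ * (B * (Bᵀ*B)⁻¹)).det = (-1 : ℝ)^m := by
    rw [zero_sub, ← Matrix.mul_assoc, ← hPdef, hPP, Matrix.det_neg]
    simp
  rw [hR] at hdets
  have hm1 : ((-1 : Matrix (Fin m) (Fin m) ℝ)).det = (-1:ℝ)^m := by
    rw [show (-1 : Matrix (Fin m) (Fin m) ℝ) = -(1:Matrix (Fin m) (Fin m) ℝ) from rfl,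
      Matrix.det_neg]
    simp
  rw [hm1] at hdets
  have hne : ((-1:ℝ)^m) ≠ 0 := pow_ne_zero _ (by norm_num)
  field_simp at hdets
  exact hdets

/-- `A`-characteristic polynomial of the complete subdivision
graph of `G`, at points `x` where the relevant matrix is invertible.  Here
$A(\mathcal L(G)) = B^TB-2I$ and $Q(G)=BB^T$. -/
theorem stmt_16 (n m : ℕ) (hm : 1 ≤ m)
    (G : SimpleGraph (Fin n)) [DecidableRel G.Adj] [Fintype G.edgeSet]
    (e : Fin m ≃ G.edgeFinset)
    (x : ℝ)
    (hinv : IsUnit ((x ^ 2 + x - 2) • (1 : Matrix (Fin m) (Fin m) ℝ) -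
      ((incMat G e)ᵀ * incMat G e - (2 : ℝ) • 1))) :
    (x + 1) ^ n *
        (x • (1 : Matrix (Fin n ⊕ Fin m) (Fin n ⊕ Fin m) ℝ) -
          Matrix.fromBlocks 0 (incMat G e) (incMat G e)ᵀ
            (Matrix.of (fun _ _ => (1 : ℝ)) - 1)).det
      = (x + 1) ^ m *
          (1 - x * coronal ((incMat G e)ᵀ * incMat G e - (2 : ℝ) • 1) (x ^ 2 + x - 2)) *
          ((x ^ 2 + x) • (1 : Matrix (Fin n) (Fin n) ℝ) -
            incMat G e * (incMat G e)ᵀ).det := by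
  classical
  set B := incMat G e with hB
  -- `n` is positive because there exists an edge
  have hn : n ≠ 0 := by
    rintro rfl
    have s : Sym2 (Fin 0) := ((e ⟨0, hm⟩ : G.edgeFinset) : Sym2 (Fin 0))
    exact Sym2.ind (fun a _ => a.elim0) s
  have hm' : m ≠ 0 := by omega
  -- block form of the characteristic matrix
  have hM := aux_block_form n m B x
  rcases eq_or_ne x 0 with hx | hx
  · -- x = 0 case
    subst hx
    have hNP : ((0:ℝ) ^ 2 + 0 - 2) • (1 : Matrix (Fin m) (Fin m) ℝ) -
        (Bᵀ * B - (2 : ℝ) • 1) = -(Bᵀ * B) := by module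
    rw [hNP, Matrix.isUnit_iff_isUnit_det, Matrix.det_neg] at hinv
    have hP : IsUnit (Bᵀ * B).det := isUnit_of_mul_isUnit_right hinv
    have hkey := aux_zero_case n m B (Matrix.of (fun _ _ => (1:ℝ))) hP
    have hgoal : (0:ℝ) • (1 : Matrix (Fin n ⊕ Fin m) (Fin n ⊕ Fin m) ℝ) -
        Matrix.fromBlocks 0 B Bᵀ (Matrix.of (fun _ _ => (1 : ℝ)) - 1)
        = Matrix.fromBlocks (0 : Matrix (Fin n) (Fin n) ℝ) (-B) (-Bᵀ)
          (1 - Matrix.of (fun _ _ => (1:ℝ))) := by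
      have e0 : ((0:ℝ)) • (1 : Matrix (Fin n) (Fin n) ℝ) = 0 := by module
      have e1 : ((0:ℝ)+1) • (1 : Matrix (Fin m) (Fin m) ℝ) - Matrix.of (fun _ _ => (1:ℝ))
          = 1 - Matrix.of (fun _ _ => (1:ℝ)) := by module
      rw [hM, e0, e1]
    have hq : ((0:ℝ) ^ 2 + 0) • (1 : Matrix (Fin n) (Fin n) ℝ) - B * Bᵀ = -(B * Bᵀ) := by
      module
    rw [hgoal, hq, hkey]
    norm_num
  · -- x ≠ 0 case
    set Jm : Matrix (Fin m) (Fin m) ℝ := Matrix.of (fun _ _ => (1:ℝ)) with hJm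
    set N : Matrix (Fin m) (Fin m) ℝ :=
      (x ^ 2 + x - 2) • 1 - (Bᵀ * B - (2 : ℝ) • 1) with hNdef
    have hNdet : IsUnit N.det := (Matrix.isUnit_iff_isUnit_det N).mp hinv
    have hN : N = (x^2+x) • 1 - Bᵀ * B := by rw [hNdef]; module
    -- the key block product
    have hprod : Matrix.fromBlocks (x • 1) (-B) (-Bᵀ) ((x+1) • 1 - Jm) *
        Matrix.fromBlocks ((x+1) • (1 : Matrix (Fin n) (Fin n) ℝ)) B 0
          (x • (1 : Matrix (Fin m) (Fin m) ℝ))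
        = Matrix.fromBlocks ((x*(x+1)) • (1 : Matrix (Fin n) (Fin n) ℝ)) 0
            ((-Bᵀ) * ((x+1) • (1 : Matrix (Fin n) (Fin n) ℝ)) +
              ((x+1) • (1 : Matrix (Fin m) (Fin m) ℝ) - Jm) * (0 : Matrix (Fin m) (Fin n) ℝ))
            (N - x • Jm) := by
      rw [Matrix.fromBlocks_multiply]
      have h11 : x • (1 : Matrix (Fin n) (Fin n) ℝ) * ((x+1) • (1 : Matrix (Fin n) (Fin n) ℝ))
            + (-B) * (0 : Matrix (Fin m) (Fin n) ℝ)
          = (x*(x+1)) • (1 : Matrix (Fin n) (Fin n) ℝ) := by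
        simp [Matrix.smul_mul, Matrix.mul_smul, smul_smul]
        module
      have h12 : x • (1 : Matrix (Fin n) (Fin n) ℝ) * B
          + (-B) * (x • (1 : Matrix (Fin m) (Fin m) ℝ)) = 0 := by
        simp [Matrix.smul_mul, Matrix.mul_smul]
      have h22 : (-Bᵀ) * B + ((x+1) • (1 : Matrix (Fin m) (Fin m) ℝ) - Jm)
            * (x • (1 : Matrix (Fin m) (Fin m) ℝ))
          = N - x • Jm := by
        rw [hN]
        simp [Matrix.smul_mul, Matrix.mul_smul, Matrix.sub_mul]
        module
      rw [h11, h12, h22]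
    have hdets := congrArg Matrix.det hprod
    rw [Matrix.det_mul, Matrix.det_fromBlocks_zero₂₁, Matrix.det_fromBlocks_zero₁₂,
      Matrix.det_smul, Matrix.det_smul, Matrix.det_smul] at hdets
    simp only [Matrix.det_one, mul_one, Fintype.card_fin] at hdets
    -- rank-one update
    have hNJ : (N - x • Jm).det = N.det * (1 - x * coronal (Bᵀ * B - (2:ℝ) • 1) (x^2+x-2)) :=
      aux_rank_one m x (Bᵀ * B) N hNdef hNdet
    -- Sylvester identity
    have hsyl : (x*(x+1))^n * N.det
        = (x*(x+1))^m * ((x^2+x) • (1 : Matrix (Fin n) (Fin n) ℝ) - B * Bᵀ).det := by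
      rcases eq_or_ne (x+1) 0 with h1 | h1
      · rw [h1, mul_zero, zero_pow hn, zero_pow hm', zero_mul, zero_mul]
      · have hy : x*(x+1) ≠ 0 := mul_ne_zero hx h1
        have := aux_sylvester n m B (x*(x+1)) hy
        rw [hN, show (x:ℝ)^2+x = x*(x+1) from by ring]
        exact this
    -- assemble
    rw [hM]
    apply mul_right_cancel₀ (pow_ne_zero m hx)
    calc ((x+1)^n *
          (Matrix.fromBlocks (x • 1) (-B) (-Bᵀ)
            ((x+1) • 1 - Jm)).det) * x^m
        = (Matrix.fromBlocks (x • 1) (-B) (-Bᵀ) ((x+1) • 1 - Jm)).det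
            * ((x+1)^n * x^m) := by ring
      _ = (x*(x+1))^n * (N - x • Jm).det := hdets
      _ = ((x*(x+1))^n * N.det) * (1 - x * coronal (Bᵀ * B - (2:ℝ) • 1) (x^2+x-2)) := by
          rw [hNJ]; ring
      _ = ((x*(x+1))^m * ((x^2+x) • (1 : Matrix (Fin n) (Fin n) ℝ) - B * Bᵀ).det)
            * (1 - x * coronal (Bᵀ * B - (2:ℝ) • 1) (x^2+x-2)) := by rw [hsyl]
      _ = ((x+1)^m * (1 - x * coronal (Bᵀ * B - (2:ℝ) • 1) (x^2+x-2)) *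
            ((x^2+x) • (1 : Matrix (Fin n) (Fin n) ℝ) - B * Bᵀ).det) * x^m := by
          rw [mul_pow]; ring
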